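/- Let S = k[x₁, x₂] be a polynomial ring over a field k and let D = S² be equipped with the S-linear endomorphism d given by the matrix with rows (x₁x₂, −x₂²) and (x₁², −x₁x₂). Then d² = 0 and the homology ker(d)/im(d) is isomorphic to k = S/(x₁, x₂) as an S-module. -/

import Mathlib

open MvPolynomial

/-- The 2×2 matrix with rows `(x₁x₂, −x₂²)`, `(x₁², −x₁x₂)` over `S = k[x₁, x₂]`. -/
noncomputable def rank2DM (k : Type) [Field k] :
    Matrix (Fin 2) (Fin 2) (MvPolynomial (Fin 2) k) :=
  !![X 0 * X 1, -(X 1 ^ 2);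
     X 0 ^ 2,   -(X 0 * X 1)]

section Aux
variable (k : Type) [Field k]

lemma primeX0 : Prime (X 0 : MvPolynomial (Fin 2) k) := by
  rw [← MulEquiv.prime_iff (MvPolynomial.finSuccEquiv k 1).toMulEquiv]
  have : (MvPolynomial.finSuccEquiv k 1).toMulEquiv (X 0) = Polynomial.X :=
    finSuccEquiv_X_zero
  rw [this]
  exact Polynomial.prime_X

lemma dApply (v : Fin 2 → MvPolynomial (Fin 2) k) :
    Matrix.toLin' (rank2DM k) v =
      ![X 0 * X 1 * v 0 - X 1 ^ 2 * v 1, X 0 ^ 2 * v 0 - X 0 * X 1 * v 1] := by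
  funext i
  fin_cases i <;>
    simp [rank2DM, Matrix.toLin'_apply, Matrix.mulVec, dotProduct, Matrix.vecHead, Matrix.vecTail,
      Fin.sum_univ_two] <;> ring

noncomputable def phi : MvPolynomial (Fin 2) k →ₗ[MvPolynomial (Fin 2) k]
    (Fin 2 → MvPolynomial (Fin 2) k) where
  toFun h := ![X 1 * h, X 0 * h]
  map_add' a b := by funext i; fin_cases i <;> simp <;> ring
  map_smul' a b := by funext i; fin_cases i <;> simp [smul_eq_mul] <;> ring

lemma phi_inj : Function.Injective (phi k) := by
  intro a b hab
  have h0 := congrFun hab 0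
  simp [phi] at h0
  exact h0

lemma range_phi : LinearMap.range (phi k) = LinearMap.ker (Matrix.toLin' (rank2DM k)) := by
  ext v
  constructor
  · rintro ⟨h, rfl⟩
    rw [LinearMap.mem_ker, dApply]
    funext i
    fin_cases i <;> simp [phi] <;> ring
  · intro hv
    rw [LinearMap.mem_ker, dApply] at hv
    have h1 : X 0 * X 1 * v 0 - X 1 ^ 2 * v 1 = 0 := congrFun hv 0
    have h2 : X 0 ^ 2 * v 0 - X 0 * X 1 * v 1 = 0 := congrFun hv 1
    have key : X 0 * v 0 = X 1 * v 1 := by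
      have : X 0 * (X 0 * v 0) = X 0 * (X 1 * v 1) := by ring_nf; ring_nf at h2; linear_combination h2
      exact mul_left_cancel₀ (X_ne_zero 0) this
    have hdvd : (X 0 : MvPolynomial (Fin 2) k) ∣ X 1 * v 1 := ⟨v 0, key.symm⟩
    rcases (primeX0 k).2.2 _ _ hdvd with h | h
    · rw [X_dvd_X] at h; exact absurd h (by decide)
    · obtain ⟨h0, hh0⟩ := h
      refine ⟨h0, ?_⟩
      have hv0 : v 0 = X 1 * h0 := by
        have : X 0 * v 0 = X 0 * (X 1 * h0) := by rw [key, hh0]; ring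
        exact mul_left_cancel₀ (X_ne_zero 0) this
      funext i
      fin_cases i <;> simp [phi, hv0, hh0]

noncomputable def eIso : MvPolynomial (Fin 2) k ≃ₗ[MvPolynomial (Fin 2) k]
    LinearMap.ker (Matrix.toLin' (rank2DM k)) :=
  (LinearEquiv.ofInjective (phi k) (phi_inj k)).trans
    (LinearEquiv.ofEq _ _ (range_phi k))

lemma eIso_coe (h : MvPolynomial (Fin 2) k) : ((eIso k h : _) : Fin 2 → MvPolynomial (Fin 2) k) = phi k h := rfl

lemma map_eIso :
    Submodule.map (eIso k : MvPolynomial (Fin 2) k →ₗ[MvPolynomial (Fin 2) k] _) (Ideal.span {(X 0 : MvPolynomial (Fin 2) k), X 1}) =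
      (LinearMap.range (Matrix.toLin' (rank2DM k))).comap
        (LinearMap.ker (Matrix.toLin' (rank2DM k))).subtype := by
  ext x
  simp only [Submodule.mem_map, Submodule.mem_comap, Submodule.coe_subtype, LinearEquiv.coe_coe,
    LinearMap.mem_range]
  constructor
  · rintro ⟨h, hh, rfl⟩
    rw [Ideal.mem_span_pair] at hh
    obtain ⟨a, b, rfl⟩ := hh
    refine ⟨![a, -b], ?_⟩
    rw [dApply, eIso_coe]
    funext i
    fin_cases i <;> simp [phi] <;> ring
  · rintro ⟨v, hv⟩
    refine ⟨X 0 * v 0 - X 1 * v 1, ?_, ?_⟩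
    · rw [Ideal.mem_span_pair]
      exact ⟨v 0, -(v 1), by ring⟩
    · apply Subtype.ext
      rw [eIso_coe, ← hv, dApply]
      funext i
      fin_cases i <;> simp [phi] <;> ring

end Aux

/-- `d² = 0` and the homology `ker d ⧸ im d` is isomorphic to
`k = S/(x₁, x₂)` as an `S`-module. -/
theorem stmt7 (k : Type) [Field k] :
    (Matrix.toLin' (rank2DM k) ∘ₗ Matrix.toLin' (rank2DM k) = 0) ∧
    Nonempty ((LinearMap.ker (Matrix.toLin' (rank2DM k)) ⧸
        (LinearMap.range (Matrix.toLin' (rank2DM k))).comap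
          (LinearMap.ker (Matrix.toLin' (rank2DM k))).subtype)
      ≃ₗ[MvPolynomial (Fin 2) k]
        MvPolynomial (Fin 2) k ⧸
          Ideal.span {(X 0 : MvPolynomial (Fin 2) k), X 1}) := by
  refine ⟨LinearMap.ext fun v => ?_, ?_⟩
  · rw [LinearMap.comp_apply, dApply, dApply]
    funext i
    fin_cases i <;> simp <;> ring
  · exact ⟨(Submodule.Quotient.equiv _ _ (eIso k) (map_eIso k)).symm⟩
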